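/- arXiv:1808.04171 — 3 statements merged into one kernel-verified Lean document; each statement's English description precedes it below -/
import Mathlib

section
/- Let α, β ≥ 0 with α + β < 1 and c > 0. Then sup_{t ≥ 0} ∫₀ᵗ (t-s)^{-α} (min(s,1))^{-β} e^{-c(t-s)} ds < ∞. -/
open MeasureTheory Real Set

/-- For `α, β ≥ 0` with `α + β < 1` and `c > 0`,
`sup_{t ≥ 0} ∫₀ᵗ (t-s)^{-α} (min(s,1))^{-β} exp(-c(t-s)) ds < ∞`. -/
theorem stmt1 (α β c : ℝ) (hα : 0 ≤ α) (hβ : 0 ≤ β) (hαβ : α + β < 1) (hc : 0 < c) :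
    ∃ M : ℝ, ∀ t : ℝ, 0 ≤ t →
      (∫ s in Set.Ioo (0 : ℝ) t,
        (t - s) ^ (-α) * (min s 1) ^ (-β) * Real.exp (-c * (t - s))) ≤ M := by
  set γ := α + β with hγdef
  have hγ0 : 0 ≤ γ := add_nonneg hα hβ
  have hγ1 : γ < 1 := hαβ
  have h1γ : (0:ℝ) < 1 - γ := by linarith
  have hr : (-1:ℝ) < -γ := by linarith
  refine ⟨2 / (1 - γ) + 2 / c, fun t ht => ?_⟩
  set a := max 0 (t - 1) with hadef
  have ha0 : 0 ≤ a := le_max_left _ _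
  have hat : a ≤ t := max_le ht (by linarith)
  have hta1 : t - a ≤ 1 := by have := le_max_right 0 (t - 1); linarith
  set m := min t 1 with hmdef
  have hm0 : 0 ≤ m := le_min ht zero_le_one
  have hm1 : m ≤ 1 := min_le_right _ _
  have hmt : m ≤ t := min_le_left _ _
  clear_value γ a m
  -- dominating function
  set g : ℝ → ℝ := fun s =>
    (Ioo a t).indicator (fun s => (t - s) ^ (-γ)) s
      + (Ioo 0 m).indicator (fun s => s ^ (-γ)) s
      + 2 * Real.exp (-c * (t - s)) with hgdef
  clear_value g
  -- integrability pieces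
  have hi1 : IntegrableOn (fun s => (t - s) ^ (-γ)) (Ioo a t) := by
    have h0 : IntervalIntegrable (fun x : ℝ => x ^ (-γ)) volume 0 (t - a) :=
      intervalIntegral.intervalIntegrable_rpow' hr
    have h1 := h0.comp_sub_left t
    simp only [sub_zero, sub_sub_cancel] at h1
    exact (intervalIntegrable_iff_integrableOn_Ioo_of_le hat).1 h1.symm
  have hi2 : IntegrableOn (fun s : ℝ => s ^ (-γ)) (Ioo 0 m) :=
    (intervalIntegrable_iff_integrableOn_Ioo_of_le hm0).1
      (intervalIntegral.intervalIntegrable_rpow' hr)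
  have hexp_cont : Continuous (fun s : ℝ => Real.exp (-c * (t - s))) :=
    (Real.continuous_exp.comp ((continuous_const.mul (continuous_const.sub continuous_id))))
  have hi3 : IntegrableOn (fun s : ℝ => 2 * Real.exp (-c * (t - s))) (Ioo 0 t) :=
    (intervalIntegrable_iff_integrableOn_Ioo_of_le ht).1
      ((continuous_const.mul hexp_cont).intervalIntegrable 0 t)
  have hind1 : Integrable ((Ioo a t).indicator (fun s => (t - s) ^ (-γ)))
      (volume.restrict (Ioo 0 t)) := by
    rw [integrable_indicator_iff measurableSet_Ioo]
    exact hi1.restrict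
  have hind2 : Integrable ((Ioo 0 m).indicator (fun s : ℝ => s ^ (-γ)))
      (volume.restrict (Ioo 0 t)) := by
    rw [integrable_indicator_iff measurableSet_Ioo]
    exact hi2.restrict
  have hgint : Integrable g (volume.restrict (Ioo 0 t)) := by
    rw [hgdef]
    exact (hind1.add hind2).add hi3
  -- pointwise bound on Ioo 0 t
  have hpt : ∀ s ∈ Ioo (0:ℝ) t,
      (t - s) ^ (-α) * (min s 1) ^ (-β) * Real.exp (-c * (t - s)) ≤ g s := by
    intro s hs
    obtain ⟨hs0, hst⟩ := hs
    have hts : 0 < t - s := by linarith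
    have hmin : 0 < min s 1 := lt_min hs0 zero_lt_one
    have hexp0 : 0 < Real.exp (-c * (t - s)) := Real.exp_pos _
    have hexp1 : Real.exp (-c * (t - s)) ≤ 1 := by
      rw [Real.exp_le_one_iff]
      nlinarith
    have key : (t - s) ^ (-α) * (min s 1) ^ (-β) ≤ (t - s) ^ (-γ) + (min s 1) ^ (-γ) := by
      rcases le_total (t - s) (min s 1) with h | h
      · have h2 : (min s 1) ^ (-β) ≤ (t - s) ^ (-β) :=
          Real.rpow_le_rpow_of_nonpos hts h (neg_nonpos.2 hβ)
        have h3 : (t - s) ^ (-α) * (min s 1) ^ (-β) ≤ (t - s) ^ (-α) * (t - s) ^ (-β) :=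
          mul_le_mul_of_nonneg_left h2 (Real.rpow_nonneg hts.le _)
        have h4 : (t - s) ^ (-α) * (t - s) ^ (-β) = (t - s) ^ (-γ) := by
          rw [← Real.rpow_add hts, hγdef]; ring_nf
        nlinarith [Real.rpow_nonneg hmin.le (-γ)]
      · have h2 : (t - s) ^ (-α) ≤ (min s 1) ^ (-α) :=
          Real.rpow_le_rpow_of_nonpos hmin h (neg_nonpos.2 hα)
        have h3 : (t - s) ^ (-α) * (min s 1) ^ (-β) ≤ (min s 1) ^ (-α) * (min s 1) ^ (-β) :=
          mul_le_mul_of_nonneg_right h2 (Real.rpow_nonneg hmin.le _)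
        have h4 : (min s 1) ^ (-α) * (min s 1) ^ (-β) = (min s 1) ^ (-γ) := by
          rw [← Real.rpow_add hmin, hγdef]; ring_nf
        nlinarith [Real.rpow_nonneg hts.le (-γ)]
    have hC : (t - s) ^ (-γ) * Real.exp (-c * (t - s)) ≤
        (Ioo a t).indicator (fun s => (t - s) ^ (-γ)) s + Real.exp (-c * (t - s)) := by
      by_cases hcase : t - 1 < s
      · have hsa : a < s := by rw [hadef]; exact max_lt hs0 (by linarith)
        have hmem : s ∈ Ioo a t := ⟨hsa, hst⟩
        rw [Set.indicator_of_mem hmem]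
        nlinarith [Real.rpow_nonneg hts.le (-γ)]
      · push_neg at hcase
        have h1 : (t - s) ^ (-γ) ≤ 1 :=
          Real.rpow_le_one_of_one_le_of_nonpos (by linarith) (by linarith)
        have h2 : (t - s) ^ (-γ) * Real.exp (-c * (t - s)) ≤ Real.exp (-c * (t - s)) := by
          nlinarith [Real.rpow_nonneg hts.le (-γ)]
        have h3 : (0:ℝ) ≤ (Ioo a t).indicator (fun s => (t - s) ^ (-γ)) s :=
          Set.indicator_nonneg (fun x hx => Real.rpow_nonneg (by linarith [hx.2] : (0:ℝ) ≤ t - x) _) s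
        linarith
    have hD : (min s 1) ^ (-γ) * Real.exp (-c * (t - s)) ≤
        (Ioo 0 m).indicator (fun s : ℝ => s ^ (-γ)) s + Real.exp (-c * (t - s)) := by
      by_cases hcase : s < 1
      · have hmem : s ∈ Ioo 0 m := ⟨hs0, by rw [hmdef]; exact lt_min hst hcase⟩
        rw [Set.indicator_of_mem hmem, min_eq_left hcase.le]
        nlinarith [Real.rpow_nonneg hs0.le (-γ)]
      · push_neg at hcase
        have h1 : min s 1 = 1 := min_eq_right hcase
        have h2 : (min s 1) ^ (-γ) = 1 := by rw [h1, Real.one_rpow]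
        have h3 : (0:ℝ) ≤ (Ioo 0 m).indicator (fun s : ℝ => s ^ (-γ)) s :=
          Set.indicator_nonneg (fun x hx => Real.rpow_nonneg hx.1.le _) s
        rw [h2, one_mul]
        linarith
    calc (t - s) ^ (-α) * (min s 1) ^ (-β) * Real.exp (-c * (t - s))
        ≤ ((t - s) ^ (-γ) + (min s 1) ^ (-γ)) * Real.exp (-c * (t - s)) :=
          mul_le_mul_of_nonneg_right key hexp0.le
      _ = (t - s) ^ (-γ) * Real.exp (-c * (t - s)) + (min s 1) ^ (-γ) * Real.exp (-c * (t - s)) := by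
          ring
      _ ≤ ((Ioo a t).indicator (fun s => (t - s) ^ (-γ)) s + Real.exp (-c * (t - s)))
            + ((Ioo 0 m).indicator (fun s : ℝ => s ^ (-γ)) s + Real.exp (-c * (t - s))) :=
          add_le_add hC hD
      _ = g s := by simp only [hgdef]; ring
  -- the main comparison
  have hmono : (∫ s in Ioo (0:ℝ) t,
      (t - s) ^ (-α) * (min s 1) ^ (-β) * Real.exp (-c * (t - s))) ≤ ∫ s in Ioo (0:ℝ) t, g s := by
    refine integral_mono_of_nonneg ?_ hgint ?_
    · filter_upwards [ae_restrict_mem measurableSet_Ioo] with s hs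
      obtain ⟨hs0, hst⟩ := hs
      have hts : (0:ℝ) < t - s := by linarith
      positivity
    · filter_upwards [ae_restrict_mem measurableSet_Ioo] with s hs
      exact hpt s hs
  -- compute/bound the integral of g
  have hsplit : (∫ s in Ioo (0:ℝ) t, g s)
      = (∫ s in Ioo (0:ℝ) t, (Ioo a t).indicator (fun s => (t - s) ^ (-γ)) s)
        + (∫ s in Ioo (0:ℝ) t, (Ioo 0 m).indicator (fun s : ℝ => s ^ (-γ)) s)
        + ∫ s in Ioo (0:ℝ) t, 2 * Real.exp (-c * (t - s)) := by
    have e12 := integral_add hind1 hind2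
    have e123 := integral_add (hind1.add hind2) hi3
    simp only [Pi.add_apply] at e12 e123
    simp only [hgdef]
    rw [e123, e12]
  have hI1 : (∫ s in Ioo (0:ℝ) t, (Ioo a t).indicator (fun s => (t - s) ^ (-γ)) s)
      ≤ 1 / (1 - γ) := by
    rw [integral_indicator measurableSet_Ioo, Measure.restrict_restrict measurableSet_Ioo,
      Set.inter_eq_self_of_subset_left (Set.Ioo_subset_Ioo ha0 le_rfl)]
    have : (∫ s in Ioo a t, (t - s) ^ (-γ)) = ∫ x in (0:ℝ)..(t - a), x ^ (-γ) := by
      rw [← integral_Ioc_eq_integral_Ioo, ← intervalIntegral.integral_of_le hat,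
        intervalIntegral.integral_comp_sub_left (fun x : ℝ => x ^ (-γ)) t, sub_self]
    rw [this, integral_rpow (Or.inl hr)]
    have h0 : (0:ℝ) ^ (-γ + 1) = 0 := by
      rw [Real.zero_rpow]; linarith
    rw [h0, sub_zero, show -γ + 1 = 1 - γ by ring]
    have hb : (t - a) ^ (1 - γ) ≤ 1 :=
      Real.rpow_le_one (by linarith) hta1 (by linarith)
    exact (div_le_div_iff_of_pos_right h1γ).2 hb
  have hI2 : (∫ s in Ioo (0:ℝ) t, (Ioo 0 m).indicator (fun s : ℝ => s ^ (-γ)) s)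
      ≤ 1 / (1 - γ) := by
    rw [integral_indicator measurableSet_Ioo, Measure.restrict_restrict measurableSet_Ioo,
      Set.inter_eq_self_of_subset_left (Set.Ioo_subset_Ioo le_rfl hmt)]
    have : (∫ s in Ioo (0:ℝ) m, s ^ (-γ)) = ∫ x in (0:ℝ)..m, x ^ (-γ) := by
      rw [← integral_Ioc_eq_integral_Ioo, intervalIntegral.integral_of_le hm0]
    rw [this, integral_rpow (Or.inl hr)]
    have h0 : (0:ℝ) ^ (-γ + 1) = 0 := by
      rw [Real.zero_rpow]; linarith
    rw [h0, sub_zero, show -γ + 1 = 1 - γ by ring]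
    have hb : m ^ (1 - γ) ≤ 1 := Real.rpow_le_one hm0 hm1 (by linarith)
    exact (div_le_div_iff_of_pos_right h1γ).2 hb
  have hI3 : (∫ s in Ioo (0:ℝ) t, 2 * Real.exp (-c * (t - s))) ≤ 2 / c := by
    have : (∫ s in Ioo (0:ℝ) t, 2 * Real.exp (-c * (t - s)))
        = 2 * ∫ x in (0:ℝ)..t, Real.exp (-c * x) := by
      rw [← integral_Ioc_eq_integral_Ioo, ← intervalIntegral.integral_of_le ht,
        intervalIntegral.integral_const_mul,
        intervalIntegral.integral_comp_sub_left (fun x : ℝ => Real.exp (-c * x)) t, sub_self,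
        sub_zero]
    rw [this]
    have hval : (∫ x in (0:ℝ)..t, Real.exp (-c * x)) = (1 - Real.exp (-c * t)) / c := by
      rw [intervalIntegral.integral_comp_mul_left (fun x : ℝ => Real.exp x) (neg_ne_zero.2 hc.ne')]
      rw [integral_exp]
      simp only [mul_zero, Real.exp_zero, smul_eq_mul]
      have hc' : c ≠ 0 := hc.ne'
      field_simp
      ring
    rw [hval]
    have h1 : (1 - Real.exp (-c * t)) / c ≤ 1 / c :=
      (div_le_div_iff_of_pos_right hc).2 (by linarith [Real.exp_pos (-c * t)])
    have h2 : 2 / c = 2 * (1 / c) := by ring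
    linarith
  have hfin : (∫ s in Ioo (0:ℝ) t, g s) ≤ 2 / (1 - γ) + 2 / c := by
    rw [hsplit]
    have : 2 / (1 - γ) = 1 / (1 - γ) + 1 / (1 - γ) := by ring
    linarith
  linarith
end

section
/- Let (f_i)_{i≥1} be nonnegative random variables adapted to a filtration such that for some a₀ > 0, ε ∈ (0,1), and all i, ℙ(f_i ≤ e^{2a₀/ε} | F_{i-1}) ≤ e^{-3a₀/ε} almost surely. Let λ > 0 with 1/(2λ) = e^{-(2a₀ − b)/ε} for some 0 < b < a₀, and let (f̃_i)_{i≥1} be i.i.d. Exponential(1) random variables independent of (f_i). Then for ε sufficiently small, ℙ(λ Σ_{i≤N} f̃_i ≥ Σ_{i≤N} f_i for some N ≥ 1) ≤ e^{-2a₀/ε}/(1 − e^{-2a₀/ε}). -/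
open MeasureTheory ProbabilityTheory Real Set



lemma stmt10_auxA' {Ω : Type} [m0 : MeasurableSpace Ω] (μ : Measure Ω) [IsProbabilityMeasure μ]
    (𝓕 : ℕ → MeasurableSpace Ω) (f : ℕ → Ω → ℝ) (hmono : Monotone 𝓕) (hle : ∀ i, 𝓕 i ≤ m0)
    (hmeas : ∀ i, 1 ≤ i → Measurable[𝓕 i] (f i)) (hnonneg : ∀ i, 1 ≤ i → ∀ ω, 0 ≤ f i ω)
    (M p t : ℝ) (ht : 0 < t) (hp : 0 ≤ p)
    (hcond : ∀ i, 1 ≤ i → ∀ᵐ ω ∂μ,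
      (μ[Set.indicator {ω' | f i ω' ≤ M} (fun _ => (1:ℝ)) | 𝓕 (i-1)]) ω ≤ p)
    (N : ℕ) :
    ∫⁻ ω, ENNReal.ofReal (∏ i ∈ Finset.Icc 1 N, Real.exp (-f i ω * t)) ∂μ
      ≤ ENNReal.ofReal ((Real.exp (-M*t) + p)^N) := by
  set c : ℝ := Real.exp (-M*t) with hc
  have hc0 : 0 < c := Real.exp_pos _
  set φ : ℕ → Ω → ℝ := fun n ω => ∏ i ∈ Finset.Icc 1 n, Real.exp (-f i ω * t) with hφ
  have hφmeasF : ∀ n, Measurable[𝓕 n] (φ n) := by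
    intro n
    apply Finset.measurable_prod
    intro i hi
    simp only [Finset.mem_Icc] at hi
    have h1 : Measurable[𝓕 n] (f i) := (hmeas i hi.1).mono (hmono hi.2) le_rfl
    exact Real.measurable_exp.comp (h1.neg.mul_const t)
  have hφmeas : ∀ n, Measurable (φ n) := fun n => (hφmeasF n).mono (hle n) le_rfl
  have hφnonneg : ∀ n ω, 0 ≤ φ n ω := fun n ω =>
    Finset.prod_nonneg fun i _ => (Real.exp_pos _).le
  have hφle1 : ∀ n ω, φ n ω ≤ 1 := by
    intro n ω
    apply Finset.prod_le_one (fun i _ => (Real.exp_pos _).le)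
    intro i hi
    simp only [Finset.mem_Icc] at hi
    rw [Real.exp_le_one_iff]
    have := hnonneg i hi.1 ω
    nlinarith
  have hφint : ∀ n, Integrable (φ n) μ := by
    intro n
    refine (integrable_const (1:ℝ)).mono' (hφmeas n).aestronglyMeasurable ?_
    filter_upwards with ω
    rw [Real.norm_eq_abs, abs_of_nonneg (hφnonneg n ω)]
    exact hφle1 n ω
  have key : ∀ n : ℕ, ∫ ω, φ n ω ∂μ ≤ (c + p)^n := by
    intro N
    induction N with
    | zero => simp [hφ]
    | succ N ih =>
      set I : Ω → ℝ := Set.indicator {ω' | f (N+1) ω' ≤ M} (fun _ => (1:ℝ)) with hI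
      have hIsetmeas : MeasurableSet {ω' | f (N+1) ω' ≤ M} :=
        measurableSet_le ((hmeas (N+1) (Nat.le_add_left 1 N)).mono (hle (N+1)) le_rfl)
          measurable_const
      have hImeas : Measurable I := measurable_const.indicator hIsetmeas
      have hInonneg : ∀ ω, 0 ≤ I ω := fun ω =>
        Set.indicator_nonneg (fun _ _ => zero_le_one) ω
      have hIle1 : ∀ ω, I ω ≤ 1 := by
        intro ω
        by_cases h : ω ∈ {ω' | f (N+1) ω' ≤ M} <;> simp [hI, h]
      have hIint : Integrable I μ := by
        refine (integrable_const (1:ℝ)).mono' hImeas.aestronglyMeasurable ?_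
        filter_upwards with ω
        rw [Real.norm_eq_abs, abs_of_nonneg (hInonneg ω)]
        exact hIle1 ω
      -- split of the last factor
      have hsplit : ∀ ω, φ (N+1) ω = φ N ω * Real.exp (-f (N+1) ω * t) := by
        intro ω
        simp only [hφ]
        exact Finset.prod_Icc_succ_top (Nat.le_add_left 1 N) _
      -- pointwise bound on the last factor
      have hptwise : ∀ ω, Real.exp (-f (N+1) ω * t) ≤ c + I ω := by
        intro ω
        by_cases h : f (N+1) ω ≤ M
        · have : I ω = 1 := Set.indicator_of_mem (show ω ∈ {ω' | f (N+1) ω' ≤ M} from h) (fun _ => (1:ℝ))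
          rw [this]
          have h1 : Real.exp (-f (N+1) ω * t) ≤ 1 := by
            rw [Real.exp_le_one_iff]
            have := hnonneg (N+1) (Nat.le_add_left 1 N) ω
            nlinarith
          linarith
        · have : I ω = 0 :=
            Set.indicator_of_notMem (show ω ∉ {ω' | f (N+1) ω' ≤ M} from h) (fun _ => (1:ℝ))
          rw [this, add_zero, hc]
          apply Real.exp_le_exp.2
          push_neg at h
          nlinarith
      -- integrability of the various products
      have hprodint : Integrable (fun ω => φ N ω * (c + I ω)) μ := by
        refine Integrable.bdd_mul (c := 1) ?_ (hφmeas N).aestronglyMeasurable (Filter.Eventually.of_forall ?_)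
        · exact (integrable_const c).add hIint
        · intro ω
          rw [Real.norm_eq_abs, abs_of_nonneg (hφnonneg N ω)]
          exact hφle1 N ω
      have hφIint : Integrable (fun ω => φ N ω * I ω) μ :=
        hIint.bdd_mul (c := 1) (hφmeas N).aestronglyMeasurable
          (Filter.Eventually.of_forall fun ω => by rw [Real.norm_eq_abs, abs_of_nonneg (hφnonneg N ω)]; exact hφle1 N ω)
      -- main chain
      have step1 : ∫ ω, φ (N+1) ω ∂μ ≤ ∫ ω, φ N ω * (c + I ω) ∂μ := by
        apply integral_mono (hφint (N+1)) hprodint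
        intro ω
        rw [hsplit ω]
        exact mul_le_mul_of_nonneg_left (hptwise ω) (hφnonneg N ω)
      have step2 : ∫ ω, φ N ω * (c + I ω) ∂μ
          = c * ∫ ω, φ N ω ∂μ + ∫ ω, φ N ω * I ω ∂μ := by
        have : ∀ ω, φ N ω * (c + I ω) = c * φ N ω + φ N ω * I ω := fun ω => by ring
        simp_rw [this]
        rw [integral_add ((hφint N).const_mul c) hφIint, integral_const_mul]
      -- conditional expectation step
      have hcondN := hcond (N+1) (Nat.le_add_left 1 N)
      have hNsub : (N+1) - 1 = N := Nat.succ_sub_one N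
      rw [hNsub] at hcondN
      have hSM : StronglyMeasurable[𝓕 N] (φ N) := (hφmeasF N).stronglyMeasurable
      have hpull : μ[fun ω => φ N ω * I ω | 𝓕 N] =ᵐ[μ] fun ω => φ N ω * (μ[I | 𝓕 N]) ω := by
        have := condExp_stronglyMeasurable_mul_of_bound (hle N) hSM hIint 1
          (by filter_upwards with ω;
              rw [Real.norm_eq_abs, abs_of_nonneg (hφnonneg N ω)]; exact hφle1 N ω)
        exact this
      have step3 : ∫ ω, φ N ω * I ω ∂μ ≤ p * ∫ ω, φ N ω ∂μ := by
        have h1 : ∫ ω, φ N ω * I ω ∂μ = ∫ ω, (μ[fun ω => φ N ω * I ω | 𝓕 N]) ω ∂μ :=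
          (integral_condExp (hle N)).symm
        have h2 : ∫ ω, (μ[fun ω => φ N ω * I ω | 𝓕 N]) ω ∂μ
            = ∫ ω, φ N ω * (μ[I | 𝓕 N]) ω ∂μ := integral_congr_ae hpull
        rw [h1, h2, ← integral_const_mul]
        apply integral_mono_ae
        · exact integrable_condExp.bdd_mul (c := 1) (hφmeas N).aestronglyMeasurable
            (Filter.Eventually.of_forall fun ω => by rw [Real.norm_eq_abs, abs_of_nonneg (hφnonneg N ω)]; exact hφle1 N ω)
        · exact (hφint N).const_mul p
        · filter_upwards [hcondN] with ω hω
          calc φ N ω * (μ[I | 𝓕 N]) ω ≤ φ N ω * p :=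
                mul_le_mul_of_nonneg_left hω (hφnonneg N ω)
            _ = p * φ N ω := mul_comm _ _
      have hintnonneg : 0 ≤ ∫ ω, φ N ω ∂μ := integral_nonneg (hφnonneg N)
      calc ∫ ω, φ (N+1) ω ∂μ ≤ c * ∫ ω, φ N ω ∂μ + ∫ ω, φ N ω * I ω ∂μ := by
            rw [← step2]; exact step1
        _ ≤ c * ∫ ω, φ N ω ∂μ + p * ∫ ω, φ N ω ∂μ := by linarith
        _ = (c + p) * ∫ ω, φ N ω ∂μ := by ring
        _ ≤ (c + p) * (c + p)^N := by
            apply mul_le_mul_of_nonneg_left ih (by positivity)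
        _ = (c + p)^(N+1) := by ring
  calc ∫⁻ ω, ENNReal.ofReal (φ N ω) ∂μ
      = ENNReal.ofReal (∫ ω, φ N ω ∂μ) :=
        (ofReal_integral_eq_lintegral_ofReal (hφint N)
          (Filter.Eventually.of_forall (hφnonneg N))).symm
    _ ≤ ENNReal.ofReal ((c + p)^N) := ENNReal.ofReal_le_ofReal (key N)


lemma stmt10_auxB :
    ∫⁻ x, ENNReal.ofReal (Real.exp (x/2)) ∂(expMeasure 1) = ENNReal.ofReal 2 := by
  have hpdfmeas : Measurable (exponentialPDF 1) :=
    ENNReal.measurable_ofReal.comp (measurable_exponentialPDFReal 1)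
  have hgmeas : Measurable (fun x : ℝ => ENNReal.ofReal (Real.exp (x/2))) :=
    ENNReal.measurable_ofReal.comp (Real.measurable_exp.comp (measurable_id.div_const 2))
  have h1 : expMeasure 1 = volume.withDensity (exponentialPDF 1) := rfl
  rw [h1, lintegral_withDensity_eq_lintegral_mul volume hpdfmeas hgmeas]
  have h2 : ∀ x : ℝ, (exponentialPDF 1 * fun x => ENNReal.ofReal (Real.exp (x/2))) x
      = Set.indicator (Ici (0:ℝ)) (fun x => ENNReal.ofReal (Real.exp (-(1/2)*x))) x := by
    intro x
    simp only [Pi.mul_apply]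
    by_cases hx : 0 ≤ x
    · rw [exponentialPDF_of_nonneg hx, Set.indicator_of_mem (mem_Ici.2 hx),
        ← ENNReal.ofReal_mul (by positivity), one_mul, ← Real.exp_add]
      ring_nf
    · rw [exponentialPDF_of_neg (lt_of_not_ge hx), zero_mul,
        Set.indicator_of_notMem (by simpa using hx)]
  rw [lintegral_congr h2, lintegral_indicator measurableSet_Ici,
    Measure.restrict_congr_set (Filter.EventuallyEq.symm Ioi_ae_eq_Ici)]
  have hint : IntegrableOn (fun x : ℝ => Real.exp (-(1/2)*x)) (Ioi 0) :=
    exp_neg_integrableOn_Ioi 0 (by norm_num)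
  rw [← ofReal_integral_eq_lintegral_ofReal hint
    (Filter.Eventually.of_forall fun x => (Real.exp_pos _).le)]
  congr 1
  have hderiv : ∀ x ∈ Ioi (0:ℝ),
      HasDerivAt (fun y : ℝ => -2 * Real.exp (-(1/2)*y)) (Real.exp (-(1/2)*x)) x := by
    intro x _
    have := (((hasDerivAt_id x).const_mul (-(1/2 : ℝ))).exp).const_mul (-2 : ℝ)
    refine HasDerivAt.congr_deriv this ?_
    simp only [id_eq]
    ring
  have htend : Filter.Tendsto (fun y : ℝ => -2 * Real.exp (-(1/2)*y)) Filter.atTop (nhds 0) := by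
    have h3 : Filter.Tendsto (fun y : ℝ => -(1/2)*y) Filter.atTop Filter.atBot := by
      apply Filter.Tendsto.const_mul_atTop_of_neg (by norm_num) Filter.tendsto_id
    have := Real.tendsto_exp_atBot.comp h3
    have := this.const_mul (-2 : ℝ)
    simpa using this
  have := integral_Ioi_of_hasDerivAt_of_tendsto
    (Continuous.continuousWithinAt (by continuity)) hderiv hint htend
  rw [this]
  norm_num


lemma stmt10_auxC {Ω : Type} [m0 : MeasurableSpace Ω] (μ : Measure Ω) [IsProbabilityMeasure μ]
    (ftil : ℕ → Ω → ℝ) (hmeas : ∀ i, Measurable (ftil i))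
    (hiid : iIndepFun ftil μ)
    (hmap : ∀ i, Measure.map (ftil i) μ = expMeasure 1) (N : ℕ) :
    ∫⁻ ω, ∏ i ∈ Finset.Icc 1 N, ENNReal.ofReal (Real.exp (ftil i ω / 2)) ∂μ
      = (ENNReal.ofReal 2)^N := by
  set g : ℕ → Ω → ENNReal := fun i ω => ENNReal.ofReal (Real.exp (ftil i ω / 2)) with hg
  have hgm : ∀ i, Measurable (g i) := fun i =>
    ENNReal.measurable_ofReal.comp (Real.measurable_exp.comp ((hmeas i).div_const 2))
  have hgiid : iIndepFun g μ :=
    hiid.comp (fun _ x => ENNReal.ofReal (Real.exp (x / 2)))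
      (fun _ => ENNReal.measurable_ofReal.comp
        (Real.measurable_exp.comp (measurable_id.div_const 2)))
  have hsingle : ∀ i, ∫⁻ ω, g i ω ∂μ = ENNReal.ofReal 2 := by
    intro i
    have : ∫⁻ ω, g i ω ∂μ
        = ∫⁻ x, ENNReal.ofReal (Real.exp (x/2)) ∂(Measure.map (ftil i) μ) :=
      (lintegral_map (ENNReal.measurable_ofReal.comp
        (Real.measurable_exp.comp (measurable_id.div_const 2))) (hmeas i)).symm
    rw [this, hmap i, stmt10_auxB]
  induction N with
  | zero => simp
  | succ N ih =>
    have hsplit : (fun ω => ∏ i ∈ Finset.Icc 1 (N+1), g i ω)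
        = (∏ i ∈ Finset.Icc 1 N, g i) * g (N+1) := by
      funext ω
      rw [Pi.mul_apply, Finset.prod_apply]
      exact Finset.prod_Icc_succ_top (Nat.le_add_left 1 N) _
    have hindep : IndepFun (∏ j ∈ Finset.Icc 1 N, g j) (g (N+1)) μ :=
      hgiid.indepFun_finsetProd_of_notMem hgm (by simp)
    have hprodmeas : Measurable (∏ j ∈ Finset.Icc 1 N, g j) := by
      have : (∏ j ∈ Finset.Icc 1 N, g j) = fun ω => ∏ j ∈ Finset.Icc 1 N, g j ω := by
        funext ω; rw [Finset.prod_apply]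
      rw [this]
      exact Finset.measurable_prod _ (fun i _ => hgm i)
    calc ∫⁻ ω, ∏ i ∈ Finset.Icc 1 (N+1), g i ω ∂μ
        = ∫⁻ ω, ((∏ i ∈ Finset.Icc 1 N, g i) * g (N+1)) ω ∂μ := by rw [hsplit]
      _ = (∫⁻ ω, (∏ i ∈ Finset.Icc 1 N, g i) ω ∂μ) * ∫⁻ ω, g (N+1) ω ∂μ :=
          lintegral_mul_eq_lintegral_mul_lintegral_of_indepFun hprodmeas (hgm (N+1)) hindep
      _ = (ENNReal.ofReal 2)^N * ENNReal.ofReal 2 := by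
          rw [hsingle (N+1), ← ih]
          congr 1
          apply lintegral_congr
          intro ω
          rw [Finset.prod_apply]
      _ = (ENNReal.ofReal 2)^(N+1) := by ring


lemma stmt10_auxD (a₀ b : ℝ) (ha : 0 < a₀) (hb0 : 0 < b) (ε : ℝ) (hε : 0 < ε)
    (h1 : ε ≤ a₀/2) (h2 : ε ≤ b^2/(16*a₀)) (h3 : ε ≤ b/4) :
    2*(Real.exp (-Real.exp (b/ε)) + Real.exp (-(3*a₀)/ε)) ≤ Real.exp (-(2*a₀)/ε) := by
  have he1 : (2:ℝ) ≤ Real.exp 1 := by have := Real.add_one_le_exp 1; linarith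
  have he2 : (4:ℝ) ≤ Real.exp 2 := by
    have h4 : Real.exp 2 = Real.exp 1 * Real.exp 1 := by
      rw [← Real.exp_add]; norm_num
    nlinarith
  have hexp2 : Real.exp (-2 : ℝ) ≤ 1/4 := by
    rw [Real.exp_neg]
    rw [inv_le_comm₀ (by positivity) (by norm_num)]
    simpa using he2
  set q := Real.exp (-(2*a₀)/ε) with hq
  have hq0 : 0 < q := Real.exp_pos _
  -- part (a)
  have ha' : Real.exp (-(3*a₀)/ε) ≤ q * (1/4) := by
    have : -(3*a₀)/ε = -(2*a₀)/ε + (-(a₀/ε)) := by field_simp; ring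
    rw [this, Real.exp_add]
    apply mul_le_mul_of_nonneg_left _ hq0.le
    calc Real.exp (-(a₀/ε)) ≤ Real.exp (-2 : ℝ) := by
          apply Real.exp_le_exp.2
          have : 2 ≤ a₀/ε := by rw [le_div_iff₀ hε]; linarith
          linarith
      _ ≤ 1/4 := hexp2
  -- part (b)
  have hb' : Real.exp (-Real.exp (b/ε)) ≤ q * (1/4) := by
    have hkey : 2*a₀/ε + 2 ≤ Real.exp (b/ε) := by
      have hy : b/(2*ε) ≤ Real.exp (b/(2*ε)) := by
        have := Real.add_one_le_exp (b/(2*ε)); linarith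
      have hy0 : 0 ≤ b/(2*ε) := by positivity
      have hsq : (b/(2*ε))^2 ≤ Real.exp (b/ε) := by
        have hexpsq : Real.exp (b/ε) = Real.exp (b/(2*ε)) * Real.exp (b/(2*ε)) := by
          rw [← Real.exp_add]; congr 1; field_simp; ring
        rw [hexpsq]
        calc (b/(2*ε))^2 = (b/(2*ε)) * (b/(2*ε)) := sq (b/(2*ε)) ▸ by ring
          _ ≤ Real.exp (b/(2*ε)) * Real.exp (b/(2*ε)) := by
              apply mul_le_mul hy hy hy0 (Real.exp_pos _).le
      refine le_trans ?_ hsq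
      have hb2 : 16*a₀*ε ≤ b^2 := by
        rw [le_div_iff₀ (by positivity)] at h2; linarith
      have hb3 : 4*ε ≤ b := by linarith [(le_div_iff₀ (by norm_num : (0:ℝ) < 4)).1 h3]
      have heq : (b/(2*ε))^2 = b^2/(4*ε^2) := by field_simp; ring
      rw [heq, ← sub_nonneg]
      have heq2 : b^2/(4*ε^2) - (2*a₀/ε + 2) = (b^2 - 8*a₀*ε - 8*ε^2)/(4*ε^2) := by
        field_simp; ring
      rw [heq2]
      apply div_nonneg _ (by positivity)
      nlinarith
    calc Real.exp (-Real.exp (b/ε)) ≤ Real.exp (-(2*a₀)/ε + (-2)) := by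
          apply Real.exp_le_exp.2
          have : -(2*a₀)/ε = -(2*a₀/ε) := by ring
          rw [this]
          linarith
      _ = q * Real.exp (-2 : ℝ) := by rw [Real.exp_add]
      _ ≤ q * (1/4) := mul_le_mul_of_nonneg_left hexp2 hq0.le
  linarith

/-- Comparison of a random walk with conditionally very large increments against an
independent exponential random walk: if `ℙ(f_i ≤ e^{2a₀/ε} | 𝓕_{i-1}) ≤ e^{-3a₀/ε}`
a.s. for all `i ≥ 1`, `(f̃_i)` are i.i.d. `Exponential(1)` independent of the `f_i`,
and `1/(2λ) = e^{-(2a₀-b)/ε}` with `0 < b < a₀`, then for all sufficiently small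
`ε` the probability that `λ Σ_{i≤N} f̃_i ≥ Σ_{i≤N} f_i` for some `N ≥ 1` is at most
`e^{-2a₀/ε}/(1 - e^{-2a₀/ε})`. -/
theorem stmt10 (a₀ b : ℝ) (ha : 0 < a₀) (hb0 : 0 < b) (hba : b < a₀) :
    ∃ ε₀ : ℝ, 0 < ε₀ ∧ ε₀ < 1 ∧ ∀ ε : ℝ, 0 < ε → ε ≤ ε₀ →
      ∀ (Ω : Type) [MeasurableSpace Ω] (μ : Measure Ω) [IsProbabilityMeasure μ]
        (𝓕 : ℕ → MeasurableSpace Ω) (f ftil : ℕ → Ω → ℝ) (l : ℝ),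
        Monotone 𝓕 → (∀ i, 𝓕 i ≤ ‹MeasurableSpace Ω›) →
        (∀ i, 1 ≤ i → Measurable[𝓕 i] (f i)) →
        (∀ i, 1 ≤ i → ∀ ω, 0 ≤ f i ω) →
        (∀ i, 1 ≤ i → ∀ᵐ ω ∂μ,
          (μ[Set.indicator {ω' | f i ω' ≤ Real.exp (2 * a₀ / ε)}
              (fun _ => (1 : ℝ)) | 𝓕 (i - 1)]) ω ≤ Real.exp (-(3 * a₀) / ε)) →
        (∀ i, Measurable (ftil i)) →
        iIndepFun ftil μ →
        (∀ i, Measure.map (ftil i) μ = expMeasure 1) →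
        Indep (⨆ i, MeasurableSpace.comap (f i) inferInstance)
          (⨆ i, MeasurableSpace.comap (ftil i) inferInstance) μ →
        0 < l → 1 / (2 * l) = Real.exp (-((2 * a₀ - b) / ε)) →
        μ {ω | ∃ N : ℕ, 1 ≤ N ∧
            ∑ i ∈ Finset.Icc 1 N, f i ω ≤ l * ∑ i ∈ Finset.Icc 1 N, ftil i ω}
          ≤ ENNReal.ofReal
              (Real.exp (-(2 * a₀) / ε) / (1 - Real.exp (-(2 * a₀) / ε))) := by
  refine ⟨min (1/2) (min (a₀/2) (min (b^2/(16*a₀)) (b/4))), by positivity, ?_, ?_⟩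
  · calc min (1/2) (min (a₀/2) (min (b^2/(16*a₀)) (b/4))) ≤ 1/2 := min_le_left _ _
      _ < 1 := by norm_num
  intro ε hε0 hεε₀ Ω mΩ μ hμ 𝓕 f ftil l hmono hle hfmeas hfnn hcond hftm hiid hmap hindep hl hinv
  -- basic constants
  set t : ℝ := Real.exp (-((2 * a₀ - b) / ε)) with hts
  have ht : 0 < t := Real.exp_pos _
  have hlt : l * t = 1/2 := by
    rw [← hinv]; field_simp
  set M : ℝ := Real.exp (2 * a₀ / ε) with hM
  set p : ℝ := Real.exp (-(3 * a₀) / ε) with hp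
  set q : ℝ := Real.exp (-(2 * a₀) / ε) with hq
  have hp0 : 0 < p := Real.exp_pos _
  have hq0 : 0 < q := Real.exp_pos _
  have hq1 : q < 1 := by
    rw [hq, neg_div]
    apply Real.exp_lt_one_iff.2
    have : 0 < 2 * a₀ / ε := by positivity
    linarith
  have hMt : M * t = Real.exp (b / ε) := by
    rw [hM, hts, ← Real.exp_add]
    congr 1
    field_simp
    ring
  have hc : Real.exp (-M*t) = Real.exp (-Real.exp (b/ε)) := by
    rw [neg_mul, hMt]
  -- the key analytic inequality
  have hεa : ε ≤ a₀/2 := hεε₀.trans ((min_le_right _ _).trans (min_le_left _ _))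
  have hεb2 : ε ≤ b^2/(16*a₀) :=
    hεε₀.trans ((min_le_right _ _).trans ((min_le_right _ _).trans (min_le_left _ _)))
  have hεb : ε ≤ b/4 :=
    hεε₀.trans ((min_le_right _ _).trans ((min_le_right _ _).trans (min_le_right _ _)))
  have hD : 2 * (Real.exp (-M*t) + p) ≤ q := by
    rw [hc]
    exact stmt10_auxD a₀ b ha hb0 ε hε0 hεa hεb2 hεb
  have hcp0 : 0 ≤ Real.exp (-M*t) + p := by positivity
  -- global measurability of f i for i ≥ 1
  have hfm : ∀ i, 1 ≤ i → Measurable (f i) := fun i hi => (hfmeas i hi).mono (hle i) le_rfl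
  -- key per-N bound
  have key : ∀ N : ℕ, μ {ω | ∑ i ∈ Finset.Icc 1 N, f i ω ≤ l * ∑ i ∈ Finset.Icc 1 N, ftil i ω}
      ≤ (ENNReal.ofReal q)^N := by
    intro N
    set G : Ω → ENNReal := fun ω => ∏ i ∈ Finset.Icc 1 N, ENNReal.ofReal (Real.exp (ftil i ω / 2))
      with hG
    set Φ : Ω → ENNReal := fun ω => ENNReal.ofReal (∏ i ∈ Finset.Icc 1 N, Real.exp (-f i ω * t))
      with hΦ
    have hGmeas : Measurable G := by
      apply Finset.measurable_prod
      intro i _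
      exact ENNReal.measurable_ofReal.comp (Real.measurable_exp.comp ((hftm i).div_const 2))
    have hΦmeas : Measurable Φ := by
      apply ENNReal.measurable_ofReal.comp
      apply Finset.measurable_prod
      intro i hi
      simp only [Finset.mem_Icc] at hi
      exact Real.measurable_exp.comp ((hfm i hi.1).neg.mul_const t)
    -- step (i): inclusion into a superlevel set
    have hsub : {ω | ∑ i ∈ Finset.Icc 1 N, f i ω ≤ l * ∑ i ∈ Finset.Icc 1 N, ftil i ω}
        ⊆ {ω | 1 ≤ G ω * Φ ω} := by
      intro ω hω
      simp only [Set.mem_setOf_eq] at hω ⊢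
      have hGval : G ω = ENNReal.ofReal (Real.exp ((∑ i ∈ Finset.Icc 1 N, ftil i ω)/2)) := by
        rw [hG]
        have : Real.exp ((∑ i ∈ Finset.Icc 1 N, ftil i ω)/2)
            = ∏ i ∈ Finset.Icc 1 N, Real.exp (ftil i ω / 2) := by
          rw [← Real.exp_sum, Finset.sum_div]
        rw [this, ENNReal.ofReal_prod_of_nonneg (fun i _ => (Real.exp_pos _).le)]
      have hΦval : Φ ω = ENNReal.ofReal (Real.exp (-(∑ i ∈ Finset.Icc 1 N, f i ω) * t)) := by
        simp only [hΦ]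
        congr 1
        have hsum : (-∑ i ∈ Finset.Icc 1 N, f i ω) * t = ∑ i ∈ Finset.Icc 1 N, -f i ω * t := by
          rw [← Finset.sum_neg_distrib, Finset.sum_mul]
        rw [hsum, Real.exp_sum]
      rw [hGval, hΦval, ← ENNReal.ofReal_mul (Real.exp_pos _).le, ← Real.exp_add]
      rw [ENNReal.one_le_ofReal, Real.one_le_exp_iff]
      have h1 : (∑ i ∈ Finset.Icc 1 N, f i ω) * t ≤ l * (∑ i ∈ Finset.Icc 1 N, ftil i ω) * t :=
        mul_le_mul_of_nonneg_right hω ht.le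
      have h2 : l * (∑ i ∈ Finset.Icc 1 N, ftil i ω) * t
          = (∑ i ∈ Finset.Icc 1 N, ftil i ω) / 2 := by
        rw [mul_comm l _, mul_assoc, hlt]; ring
      nlinarith
    -- step (ii): Markov
    have hmarkov : μ {ω | 1 ≤ G ω * Φ ω} ≤ ∫⁻ ω, G ω * Φ ω ∂μ := by
      have := mul_meas_ge_le_lintegral₀ (μ := μ) (f := fun ω => G ω * Φ ω)
        ((hGmeas.mul hΦmeas).aemeasurable) 1
      simpa using this
    -- step (iii): independence
    have hMfle : (⨆ i, MeasurableSpace.comap (ftil i) inferInstance) ≤ mΩ :=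
      iSup_le fun i => measurable_iff_comap_le.1 (hftm i)
    have hMgle : (⨆ i : {i : ℕ // 1 ≤ i}, MeasurableSpace.comap (f i) inferInstance) ≤ mΩ :=
      iSup_le fun i => measurable_iff_comap_le.1 (hfm i i.2)
    have hind2 : Indep (⨆ i, MeasurableSpace.comap (ftil i) inferInstance)
        (⨆ i : {i : ℕ // 1 ≤ i}, MeasurableSpace.comap (f i) inferInstance) μ := by
      apply indep_of_indep_of_le_right hindep.symm
      exact iSup_le fun i => le_iSup (fun j : ℕ => MeasurableSpace.comap (f j) inferInstance) (i : ℕ)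
    have hGmeasMf : Measurable[⨆ i, MeasurableSpace.comap (ftil i) inferInstance] G := by
      apply Finset.measurable_prod
      intro i _
      exact (ENNReal.measurable_ofReal.comp (Real.measurable_exp.comp (measurable_id.div_const 2))).comp
        (Measurable.of_comap_le (le_iSup (fun j => MeasurableSpace.comap (ftil j) inferInstance) i))
    have hΦmeasMg : Measurable[⨆ i : {i : ℕ // 1 ≤ i}, MeasurableSpace.comap (f i) inferInstance] Φ := by
      apply ENNReal.measurable_ofReal.comp
      apply Finset.measurable_prod
      intro i hi
      simp only [Finset.mem_Icc] at hi
      have : Measurable[⨆ i : {i : ℕ // 1 ≤ i}, MeasurableSpace.comap (f i) inferInstance] (f i) :=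
        Measurable.of_comap_le
          (le_iSup (fun j : {i : ℕ // 1 ≤ i} => MeasurableSpace.comap (f j) inferInstance) ⟨i, hi.1⟩)
      exact Real.measurable_exp.comp (this.neg.mul_const t)
    have hfactor : ∫⁻ ω, G ω * Φ ω ∂μ = (∫⁻ ω, G ω ∂μ) * ∫⁻ ω, Φ ω ∂μ :=
      lintegral_mul_eq_lintegral_mul_lintegral_of_independent_measurableSpace
        hMfle hMgle hind2 hGmeasMf hΦmeasMg
    -- step (iv): values of the two integrals
    have hGint : ∫⁻ ω, G ω ∂μ = (ENNReal.ofReal 2)^N := stmt10_auxC μ ftil hftm hiid hmap N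
    have hΦint : ∫⁻ ω, Φ ω ∂μ ≤ ENNReal.ofReal ((Real.exp (-M*t) + p)^N) :=
      stmt10_auxA' μ 𝓕 f hmono hle hfmeas hfnn M p t ht hp0.le hcond N
    -- combine
    calc μ {ω | ∑ i ∈ Finset.Icc 1 N, f i ω ≤ l * ∑ i ∈ Finset.Icc 1 N, ftil i ω}
        ≤ μ {ω | 1 ≤ G ω * Φ ω} := measure_mono hsub
      _ ≤ ∫⁻ ω, G ω * Φ ω ∂μ := hmarkov
      _ = (∫⁻ ω, G ω ∂μ) * ∫⁻ ω, Φ ω ∂μ := hfactor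
      _ ≤ (ENNReal.ofReal 2)^N * ENNReal.ofReal ((Real.exp (-M*t) + p)^N) := by
          rw [hGint]
          exact mul_le_mul_right hΦint _
      _ = ENNReal.ofReal (2 ^ N * (Real.exp (-M*t) + p)^N) := by
          rw [← ENNReal.ofReal_pow (by norm_num : (0:ℝ) ≤ 2),
            ← ENNReal.ofReal_mul (by positivity)]
      _ = ENNReal.ofReal ((2 * (Real.exp (-M*t) + p))^N) := by rw [mul_pow]
      _ ≤ (ENNReal.ofReal q)^N := by
          rw [← ENNReal.ofReal_pow hq0.le]
          exact ENNReal.ofReal_le_ofReal (pow_le_pow_left₀ (by positivity) hD N)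
  -- union bound and geometric series
  set Q : ENNReal := ENNReal.ofReal q with hQ
  have hsubU : {ω | ∃ N : ℕ, 1 ≤ N ∧
      ∑ i ∈ Finset.Icc 1 N, f i ω ≤ l * ∑ i ∈ Finset.Icc 1 N, ftil i ω}
      ⊆ ⋃ n : ℕ, {ω | ∑ i ∈ Finset.Icc 1 (n+1), f i ω
          ≤ l * ∑ i ∈ Finset.Icc 1 (n+1), ftil i ω} := by
    intro ω hω
    obtain ⟨N, hN1, hN⟩ := hω
    apply Set.mem_iUnion.2 ⟨N-1, ?_⟩
    simp only [Set.mem_setOf_eq]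
    rwa [Nat.sub_add_cancel hN1]
  calc μ {ω | ∃ N : ℕ, 1 ≤ N ∧
      ∑ i ∈ Finset.Icc 1 N, f i ω ≤ l * ∑ i ∈ Finset.Icc 1 N, ftil i ω}
      ≤ μ (⋃ n : ℕ, {ω | ∑ i ∈ Finset.Icc 1 (n+1), f i ω
          ≤ l * ∑ i ∈ Finset.Icc 1 (n+1), ftil i ω}) := measure_mono hsubU
    _ ≤ ∑' n : ℕ, μ {ω | ∑ i ∈ Finset.Icc 1 (n+1), f i ω
          ≤ l * ∑ i ∈ Finset.Icc 1 (n+1), ftil i ω} := measure_iUnion_le _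
    _ ≤ ∑' n : ℕ, Q^(n+1) := ENNReal.tsum_le_tsum (fun n => key (n+1))
    _ = (∑' n : ℕ, Q^n) * Q := by
        simp_rw [pow_succ]
        rw [ENNReal.tsum_mul_right]
    _ = (1 - Q)⁻¹ * Q := by rw [ENNReal.tsum_geometric]
    _ = ENNReal.ofReal (q / (1 - q)) := by
        rw [ENNReal.ofReal_div_of_pos (by linarith), hQ]
        have h1Q : 1 - Q = ENNReal.ofReal (1 - q) := by
          rw [ENNReal.ofReal_sub 1 hq0.le, ENNReal.ofReal_one]
        rw [← h1Q, div_eq_mul_inv, mul_comm]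
end

section
/- Let Y : [0,∞) → ℝ≥0 be continuous and suppose that there are constants C ≥ 1, κ ∈ (0,2), and sequences of times 0 = ρ₀ ≤ ν₁ ≤ ρ₁ ≤ ν₂ ≤ ... with ν_i → ∞, such that for each i ≥ 1: (a) Y(t) ≤ C e^{-(2-κ/2)(t - ρ_{i-1})} Y(ρ_{i-1}) for all t ∈ [ρ_{i-1}, ν_i], and (b) Y(t) ≤ C e^{ℓ_i (t - ν_i)} Y(ν_i) for all t ∈ [ν_i, ρ_i] with some ℓ_i ≥ 0. If additionally Σ_{j≤i} [(κ/2)(ν_j − ρ_{j-1}) − ℓ_j(ρ_j − ν_j) − (2-κ)(ρ_j − ν_j) − 2 log C] ≥ 0 for every i ≥ 1, then Y(ρ_i) ≤ e^{-(2-κ)ρ_i} Y(0) for every i ≥ 1, and moreover Y(ν_i) ≤ C e^{-(2-κ)ν_i} e^{-(κ/2)(ν_i - ρ_{i-1})} e^{-S_{i-1}} Y(0) where S_{i-1} is the partial sum in the displayed condition up to index i−1. -/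
open Real Set

private lemma stmt18_aux (C a b c Y0 : ℝ) (hC : 0 < C) :
    C * Real.exp a * (C * Real.exp b * (Real.exp c * Y0))
      = Real.exp (a + b + c + 2 * Real.log C) * Y0 := by
  rw [show a + b + c + 2 * Real.log C = a + b + c + (Real.log C + Real.log C) by ring,
    Real.exp_add, Real.exp_add, Real.exp_add, Real.exp_add, Real.exp_log hC]
  ring

/-- Deterministic gluing argument: alternating "good" intervals `[ρ_{i-1}, ν_i]`
with exponential contraction at rate `2 - κ/2` and "bad" intervals `[ν_i, ρ_i]`
with exponential growth at rate `ℓ_i`.  If the random-walk-type partial sums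
`S_i = Σ_{j ≤ i} [(κ/2)(ν_j − ρ_{j-1}) − ℓ_j (ρ_j − ν_j) − (2-κ)(ρ_j − ν_j) − 2 log C]`
are nonnegative for every `i ≥ 1`, then `Y(ρ_i) ≤ e^{-(2-κ) ρ_i} Y(0)` and
`Y(ν_i) ≤ C e^{-(2-κ) ν_i} e^{-(κ/2)(ν_i − ρ_{i-1})} e^{-S_{i-1}} Y(0)` for every `i ≥ 1`. -/
theorem stmt18 (Y : ℝ → ℝ) (hYc : Continuous Y) (hYpos : ∀ t, 0 ≤ t → 0 ≤ Y t)
    (C κ : ℝ) (hC : 1 ≤ C) (hκ0 : 0 < κ) (hκ2 : κ < 2)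
    (ρ ν : ℕ → ℝ) (ℓ : ℕ → ℝ) (hℓ : ∀ i, 0 ≤ ℓ i)
    (hρ0 : ρ 0 = 0)
    (horder : ∀ i : ℕ, 1 ≤ i → ρ (i - 1) ≤ ν i ∧ ν i ≤ ρ i)
    (hνtop : Filter.Tendsto ν Filter.atTop Filter.atTop)
    (hgood : ∀ i : ℕ, 1 ≤ i → ∀ t ∈ Set.Icc (ρ (i - 1)) (ν i),
      Y t ≤ C * Real.exp (-(2 - κ / 2) * (t - ρ (i - 1))) * Y (ρ (i - 1)))
    (hbad : ∀ i : ℕ, 1 ≤ i → ∀ t ∈ Set.Icc (ν i) (ρ i),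
      Y t ≤ C * Real.exp (ℓ i * (t - ν i)) * Y (ν i))
    (S : ℕ → ℝ)
    (hS : ∀ i : ℕ, S i = ∑ j ∈ Finset.range i,
      ((κ / 2) * (ν (j + 1) - ρ j) - ℓ (j + 1) * (ρ (j + 1) - ν (j + 1))
        - (2 - κ) * (ρ (j + 1) - ν (j + 1)) - 2 * Real.log C))
    (hSpos : ∀ i : ℕ, 1 ≤ i → 0 ≤ S i) :
    ∀ i : ℕ, 1 ≤ i →
      Y (ρ i) ≤ Real.exp (-(2 - κ) * ρ i) * Y 0 ∧
      Y (ν i) ≤ C * Real.exp (-(2 - κ) * ν i) *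
        Real.exp (-(κ / 2) * (ν i - ρ (i - 1))) * Real.exp (-(S (i - 1))) * Y 0 := by
  have hCpos : (0 : ℝ) < C := lt_of_lt_of_le one_pos hC
  have hS0 : S 0 = 0 := by simp [hS]
  -- the key strengthened induction
  have key : ∀ n : ℕ, Y (ρ n) ≤ Real.exp (-(2 - κ) * ρ n - S n) * Y 0 := by
    intro n
    induction n with
    | zero => simp [hρ0, hS0]
    | succ n ih =>
      have h1 : ρ n ≤ ν (n + 1) ∧ ν (n + 1) ≤ ρ (n + 1) := by
        have := horder (n + 1) (by omega)
        simpa using this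
      have hν := hgood (n + 1) (by omega) (ν (n + 1)) ⟨by simpa using h1.1, le_refl _⟩
      simp only [Nat.add_sub_cancel] at hν
      have hρb := hbad (n + 1) (by omega) (ρ (n + 1)) ⟨h1.2, le_refl _⟩
      have step1 : Y (ν (n + 1)) ≤
          C * Real.exp (-(2 - κ / 2) * (ν (n + 1) - ρ n)) *
            (Real.exp (-(2 - κ) * ρ n - S n) * Y 0) :=
        hν.trans (mul_le_mul_of_nonneg_left ih (by positivity))
      have step2 : Y (ρ (n + 1)) ≤
          C * Real.exp (ℓ (n + 1) * (ρ (n + 1) - ν (n + 1))) *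
            (C * Real.exp (-(2 - κ / 2) * (ν (n + 1) - ρ n)) *
              (Real.exp (-(2 - κ) * ρ n - S n) * Y 0)) :=
        hρb.trans (mul_le_mul_of_nonneg_left step1 (by positivity))
      refine step2.trans (le_of_eq ?_)
      rw [stmt18_aux _ _ _ _ _ hCpos]
      have hSn1 : S (n + 1) = S n +
          ((κ / 2) * (ν (n + 1) - ρ n) - ℓ (n + 1) * (ρ (n + 1) - ν (n + 1))
            - (2 - κ) * (ρ (n + 1) - ν (n + 1)) - 2 * Real.log C) := by
        rw [hS, hS, Finset.sum_range_succ]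
      have harg : ℓ (n + 1) * (ρ (n + 1) - ν (n + 1)) + -(2 - κ / 2) * (ν (n + 1) - ρ n)
          + (-(2 - κ) * ρ n - S n) + 2 * Real.log C
          = -(2 - κ) * ρ (n + 1) - S (n + 1) := by
        rw [hSn1]; ring
      rw [harg]
  intro i hi
  obtain ⟨n, rfl⟩ : ∃ n, i = n + 1 := ⟨i - 1, by omega⟩
  have hY0 : 0 ≤ Y 0 := hYpos 0 le_rfl
  constructor
  · refine (key (n + 1)).trans (mul_le_mul_of_nonneg_right ?_ hY0)
    apply Real.exp_le_exp.2
    have := hSpos (n + 1) (by omega)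
    linarith
  · have h1 : ρ n ≤ ν (n + 1) ∧ ν (n + 1) ≤ ρ (n + 1) := by
      have := horder (n + 1) (by omega)
      simpa using this
    have hν := hgood (n + 1) (by omega) (ν (n + 1)) ⟨by simpa using h1.1, le_refl _⟩
    simp only [Nat.add_sub_cancel] at hν ⊢
    refine (hν.trans (mul_le_mul_of_nonneg_left (key n) (by positivity))).trans (le_of_eq ?_)
    rw [show -(2 - κ / 2) * (ν (n + 1) - ρ n)
        = (-(2 - κ) * ν (n + 1) - (-(2 - κ) * ρ n)) + (-(κ / 2) * (ν (n + 1) - ρ n)) by ring]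
    rw [Real.exp_add, Real.exp_sub, show -(2 - κ) * ρ n - S n = -(2 - κ) * ρ n + -S n by ring,
      Real.exp_add]
    field_simp
end
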